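/- arXiv:0910.4601 — 4 statements merged into one kernel-verified Lean document; each statement's English description precedes it below -/
import Mathlib

section
/- Let p > q > 0 be coprime integers with continued fraction expansions p/q = [a_1,...,a_l] and p/(p-q) = [b_1,...,b_k], where all a_i, b_j ≥ 2 and [c_1,...,c_m] denotes the continued fraction c_1 - 1/(c_2 - 1/(... - 1/c_m)). Then the two strings (a_1,...,a_l) and (b_1,...,b_k) are related as follows: starting from the pair of strings ((2),(2)), each can be obtained from the other by a finite sequence of operations of type (1): ((a_1,...,a_n),(b_1,...,b_m)) → ((a_1,...,a_n+1),(b_1,...,b_m,2)), and type (2): ((a_1,...,a_n),(b_1,...,b_m)) → ((a_1,...,a_n,2),(b_1,...,b_m+1)). -/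
/-- Negative continued fraction `[a₁,...,aₖ] = a₁ - 1/(a₂ - 1/(⋯ - 1/aₖ))`.
(Since `(0 : ℚ)⁻¹ = 0`, the value on a one-element list `[a]` is `a`.) -/
def negCF : List ℤ → ℚ
  | [] => 0
  | a :: l => (a : ℚ) - (negCF l)⁻¹

/-- Increase the last entry of a list of integers by `1`. -/
def bumpLast (l : List ℤ) : List ℤ := l.dropLast ++ [l.getLast! + 1]

/-- Riemenschneider's point rule relation on pairs of strings of integers: generated
from the pair `((2),(2))` by the operations
`(1) : (a₁,...,aₙ),(b₁,...,bₘ) ↦ (a₁,...,aₙ+1),(b₁,...,bₘ,2)` and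
`(2) : (a₁,...,aₙ),(b₁,...,bₘ) ↦ (a₁,...,aₙ,2),(b₁,...,bₘ+1)`. -/
inductive RiemRel : List ℤ → List ℤ → Prop
  | base : RiemRel [2] [2]
  | op1 {a b : List ℤ} : RiemRel a b → RiemRel (bumpLast a) (b ++ [2])
  | op2 {a b : List ℤ} : RiemRel a b → RiemRel (a ++ [2]) (bumpLast b)


def RiemCF.nd : List ℤ → ℤ × ℤ
  | [] => (1, 0)
  | a :: l => (a * (nd l).1 - (nd l).2, (nd l).1)

namespace RiemCF

def num (l : List ℤ) : ℤ := (nd l).1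
def den (l : List ℤ) : ℤ := (nd l).2

@[simp] lemma num_nil : num ([] : List ℤ) = 1 := rfl
@[simp] lemma den_nil : den ([] : List ℤ) = 0 := rfl
@[simp] lemma num_cons (a : ℤ) (l : List ℤ) : num (a :: l) = a * num l - den l := rfl
@[simp] lemma den_cons (a : ℤ) (l : List ℤ) : den (a :: l) = num l := rfl

lemma bounds : ∀ l : List ℤ, (∀ x ∈ l, 2 ≤ x) → 0 ≤ den l ∧ den l < num l
  | [], _ => by simp
  | a :: l, h => by
    have ih := bounds l (fun x hx => h x (List.mem_cons_of_mem _ hx))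
    have ha : 2 ≤ a := h a (List.mem_cons_self)
    simp only [num_cons, den_cons]
    constructor <;> nlinarith [ih.1, ih.2]

lemma num_pos (l : List ℤ) (h : ∀ x ∈ l, 2 ≤ x) : 0 < num l :=
  lt_of_le_of_lt (bounds l h).1 (bounds l h).2

lemma num_ge_two (l : List ℤ) (h : ∀ x ∈ l, 2 ≤ x) (hne : l ≠ []) : 2 ≤ num l := by
  match l with
  | a :: l =>
    have hb := bounds l (fun x hx => h x (List.mem_cons_of_mem _ hx))
    have ha : 2 ≤ a := h a (List.mem_cons_self)
    have hp : 0 < num l := lt_of_le_of_lt hb.1 hb.2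
    simp only [num_cons]; nlinarith [hb.1, hb.2]

lemma den_pos (l : List ℤ) (h : ∀ x ∈ l, 2 ≤ x) (hne : l ≠ []) : 0 < den l := by
  match l with
  | a :: l => simpa using num_pos l (fun x hx => h x (List.mem_cons_of_mem _ hx))

lemma negCF_eq (l : List ℤ) (h : ∀ x ∈ l, 2 ≤ x) :
    negCF l = (num l : ℚ) / (den l : ℚ) := by
  induction l with
  | nil => simp [negCF]
  | cons a l ih =>
    have h2 := fun x hx => h x (List.mem_cons_of_mem _ hx)
    have hn : (0 : ℚ) < (num l : ℚ) := by exact_mod_cast num_pos l h2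
    have hd : (0 : ℚ) ≤ (den l : ℚ) := by exact_mod_cast (bounds l h2).1
    have hn' : (num l : ℚ) ≠ 0 := ne_of_gt hn
    rw [negCF, ih h2, inv_div]
    simp only [num_cons, den_cons]
    push_cast
    field_simp

lemma coprime_nd : ∀ l : List ℤ, IsCoprime (num l) (den l)
  | [] => isCoprime_one_left
  | a :: l => by
    obtain ⟨u, v, huv⟩ := coprime_nd l
    exact ⟨-v, u + v * a, by simp only [num_cons, den_cons]; linear_combination huv⟩

lemma det : ∀ l : List ℤ, l ≠ [] →
    den l * num l.dropLast - num l * den l.dropLast = 1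
  | [a], _ => by simp
  | a :: b :: l, _ => by
    have ih := det (b :: l) (by simp)
    simp only [List.dropLast_cons₂, num_cons, den_cons] at *
    linear_combination ih

end RiemCF
namespace RiemCF

lemma den_eq_num_tail (l : List ℤ) (h : l ≠ []) : den l = num l.tail := by
  cases l with
  | nil => simp at h
  | cons a t => rfl

lemma dropLast_reverse (l : List ℤ) : l.reverse.dropLast = l.tail.reverse := by
  cases l with
  | nil => simp
  | cons a t => simp [List.reverse_cons, List.dropLast_concat]

lemma append_last : ∀ m : List ℤ, m ≠ [] → ∀ x : ℤ,
    num (m ++ [x]) = x * num m - num m.dropLast ∧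
    den (m ++ [x]) = x * den m - den m.dropLast
  | [c], _, x => by simp; ring
  | c :: d :: m, _, x => by
    have ih := append_last (d :: m) (by simp) x
    simp only [List.cons_append, num_cons, den_cons, List.dropLast_cons₂] at *
    constructor
    · rw [ih.1, ih.2]; ring
    · rw [ih.1]

lemma num_reverse_aux : ∀ n : ℕ, ∀ l : List ℤ, l.length ≤ n → num l.reverse = num l := by
  intro n
  induction n with
  | zero =>
    intro l h
    have : l = [] := List.eq_nil_of_length_eq_zero (by omega)
    simp [this]
  | succ n ih =>
    intro l hlen
    match l with
    | [] => simp
    | [a] => simp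
    | a :: b :: t =>
      have hlt : (b :: t).length ≤ n := by simp at hlen ⊢; omega
      have hlt2 : t.length ≤ n := by simp at hlen ⊢; omega
      have h1 : num (b :: t).reverse = num (b :: t) := ih _ hlt
      have h2 : num t.reverse = num t := ih _ hlt2
      have hrev : (a :: b :: t).reverse = (b :: t).reverse ++ [a] := by
        simp [List.reverse_cons]
      have hne : (b :: t).reverse ≠ [] := by simp
      rw [hrev, (append_last _ hne a).1, h1]
      have hdl : (b :: t).reverse.dropLast = t.reverse := dropLast_reverse (b :: t)
      rw [hdl, h2]
      simp

lemma num_reverse (l : List ℤ) : num l.reverse = num l := num_reverse_aux l.length l le_rfl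

/-- Head-version of the Riemenschneider relation (acting on reversed strings). -/
inductive R' : List ℤ → List ℤ → Prop
  | base : R' [2] [2]
  | op1 (x : ℤ) (l b : List ℤ) : R' (x :: l) b → R' ((x + 1) :: l) (2 :: b)
  | op2 (a : List ℤ) (y : ℤ) (m : List ℤ) : R' a (y :: m) → R' (2 :: a) ((y + 1) :: m)

lemma getLast!_concat (m : List ℤ) (x : ℤ) : (m ++ [x]).getLast! = x := by
  induction m with
  | nil => rfl
  | cons a t ih =>
    cases t with
    | nil => rfl
    | cons b u => simpa using ih

lemma bumpLast_concat (m : List ℤ) (x : ℤ) : bumpLast (m ++ [x]) = m ++ [x + 1] := by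
  unfold bumpLast
  rw [List.dropLast_concat, getLast!_concat]

lemma R'.toRiemRel {a b : List ℤ} (h : R' a b) : RiemRel a.reverse b.reverse := by
  induction h with
  | base => exact RiemRel.base
  | op1 x l c _ ih =>
    have h2 := RiemRel.op1 ih
    rw [List.reverse_cons, bumpLast_concat] at h2
    simpa [List.reverse_cons] using h2
  | op2 c y m _ ih =>
    have h2 := RiemRel.op2 ih
    rw [show (y :: m).reverse = m.reverse ++ [y] by simp, bumpLast_concat] at h2
    simpa [List.reverse_cons] using h2

lemma num_eq_one_iff (l : List ℤ) (h : ∀ x ∈ l, 2 ≤ x) (h1 : num l = 1) : l = [] := by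
  by_contra hne
  have := num_ge_two l h hne
  omega

lemma main : ∀ n : ℕ, ∀ p r : ℤ, p.toNat ≤ n → 0 < r → r < p → IsCoprime p r →
    ∀ A B : List ℤ, A ≠ [] → B ≠ [] → (∀ x ∈ A, 2 ≤ x) → (∀ x ∈ B, 2 ≤ x) →
    num A = p → den A = r → num B = p → den B = p - r → R' A B := by
  intro n
  induction n with
  | zero => intro p r hpn hr hrp; omega
  | succ n ih =>
    intro p r hpn hr hrp hcop A B hAne hBne hA2 hB2 hnA hdA hnB hdB
    match A, B with
    | a :: A', b :: B' =>
    have hA'2 : ∀ x ∈ A', 2 ≤ x := fun x hx => hA2 x (List.mem_cons_of_mem _ hx)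
    have hB'2 : ∀ x ∈ B', 2 ≤ x := fun x hx => hB2 x (List.mem_cons_of_mem _ hx)
    have ha2 : 2 ≤ a := hA2 a (List.mem_cons_self)
    have hb2 : 2 ≤ b := hB2 b (List.mem_cons_self)
    have hnA' : num A' = r := by simpa using hdA
    have hnB' : num B' = p - r := by simpa using hdB
    have hdA' : den A' = a * r - p := by
      have := hnA; simp only [num_cons, hnA'] at this; omega
    have hdB' : den B' = b * (p - r) - p := by
      have := hnB; simp only [num_cons, hnB'] at this; omega
    have hbA := bounds A' hA'2
    have hbB := bounds B' hB'2
    rcases lt_trichotomy (2 * r) p with hlt | heq | hgt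
    · -- 2r < p : last step was op1
      have ha3 : 3 ≤ a := by nlinarith [hbA.1]
      have hb2' : b = 2 := by
        have h1 : b < 3 := by nlinarith [hbB.2]
        have h2 : 1 < b := by nlinarith [hbB.1]
        omega
      have hB'ne : B' ≠ [] := by
        intro h; rw [h] at hnB'; simp at hnB'; omega
      have hcop' : IsCoprime (p - r) r := by
        obtain ⟨u, v, huv⟩ := hcop
        exact ⟨u, v + u, by linarith⟩
      have key := ih (p - r) r (by omega) hr (by omega) hcop'
        ((a - 1) :: A') B' (by simp) hB'ne
        (by intro x hx; rcases List.mem_cons.mp hx with h | h; omega; exact hA'2 x h)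
        hB'2
        (by simp only [num_cons, hnA', hdA']; ring)
        (by simp [hnA'])
        hnB'
        (by rw [hdB', hb2']; ring)
      have := R'.op1 (a - 1) A' B' key
      simpa [hb2', show a - 1 + 1 = a by ring] using this
    · -- 2r = p : base case p = 2, r = 1
      subst heq
      obtain ⟨u, v, huv⟩ := hcop
      have hr1 : r ∣ 1 := ⟨u * 2 + v, by linear_combination -huv⟩
      have hr1' : r = 1 := Int.eq_one_of_dvd_one (by omega) hr1
      subst hr1'
      have hA'nil : A' = [] := num_eq_one_iff A' hA'2 (by omega)
      have hB'nil : B' = [] := num_eq_one_iff B' hB'2 (by omega)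
      have ha : a = 2 := by
        rw [hA'nil] at hdA'; simp at hdA'; omega
      have hb : b = 2 := by
        rw [hB'nil] at hdB'; simp at hdB'; omega
      rw [hA'nil, hB'nil, ha, hb]
      exact R'.base
    · -- 2r > p : last step was op2
      have hb3 : 3 ≤ b := by nlinarith [hbB.1]
      have ha2' : a = 2 := by
        have h1 : a < 3 := by nlinarith [hbA.2]
        have h2 : 1 < a := by nlinarith [hbA.1]
        omega
      have hA'ne : A' ≠ [] := by
        intro h; rw [h] at hnA'; simp at hnA'; omega
      have hcop' : IsCoprime r (2 * r - p) := by
        obtain ⟨u, v, huv⟩ := hcop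
        exact ⟨v + 2 * u, -u, by linarith⟩
      have key := ih r (2 * r - p) (by omega) (by omega) (by omega) hcop'
        A' ((b - 1) :: B') hA'ne (by simp)
        hA'2
        (by intro x hx; rcases List.mem_cons.mp hx with h | h; omega; exact hB'2 x h)
        hnA'
        (by rw [hdA', ha2'])
        (by simp only [num_cons, hnB', hdB']; ring)
        (by simp only [den_cons, hnB']; ring)
      have := R'.op2 A' (b - 1) B' key
      simpa [ha2', show b - 1 + 1 = b by ring] using this

end RiemCF
namespace RiemCF

lemma nd_of_negCF (l : List ℤ) (hne : l ≠ []) (h2 : ∀ x ∈ l, 2 ≤ x)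
    (p q : ℤ) (hp : 0 < p) (hq : 0 < q) (hcop : IsCoprime p q)
    (h : negCF l = (p : ℚ) / (q : ℚ)) : num l = p ∧ den l = q := by
  rw [negCF_eq l h2] at h
  have hdl : 0 < den l := den_pos l h2 hne
  have hnl : 0 < num l := num_pos l h2
  have h' : num l * q = p * den l := by
    rw [div_eq_div_iff (by exact_mod_cast hdl.ne') (by exact_mod_cast hq.ne')] at h
    exact_mod_cast h
  have hpd : p ∣ num l := hcop.dvd_of_dvd_mul_right ⟨den l, h'⟩
  have hnp : num l ∣ p := (coprime_nd l).dvd_of_dvd_mul_right ⟨q, by linarith⟩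
  have hnum : num l = p := Int.dvd_antisymm hnl.le hp.le hnp hpd
  refine ⟨hnum, ?_⟩
  rw [hnum] at h'
  exact (mul_left_cancel₀ hp.ne' h').symm

end RiemCF

/-- If `p > q > 0` are coprime and `[a₁,...,a_l] = p/q`,
`[b₁,...,b_k] = p/(p-q)` with all entries `≥ 2`, then the two strings are related by
Riemenschneider's point rule. -/
theorem riemRel_of_negCF (p q : ℤ) (h0 : 0 < q) (hqp : q < p) (hcop : Int.gcd p q = 1)
    (A B : List ℤ) (hA : A ≠ []) (hB : B ≠ [])
    (hA2 : ∀ x ∈ A, 2 ≤ x) (hB2 : ∀ x ∈ B, 2 ≤ x)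
    (hcfA : negCF A = (p : ℚ) / (q : ℚ))
    (hcfB : negCF B = (p : ℚ) / ((p : ℚ) - (q : ℚ))) :
    RiemRel A B := by
  have hp : 0 < p := lt_trans h0 hqp
  have hcopQ : IsCoprime p q := Int.isCoprime_iff_gcd_eq_one.mpr hcop
  have hcopQ' : IsCoprime p (p - q) := by
    obtain ⟨u, v, huv⟩ := hcopQ
    exact ⟨u + v, -v, by linear_combination huv⟩
  have hAnd := RiemCF.nd_of_negCF A hA hA2 p q hp h0 hcopQ hcfA
  have hBnd := RiemCF.nd_of_negCF B hB hB2 p (p - q) hp (by omega) hcopQ'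
    (by rw [hcfB]; norm_cast)
  have hArne : A.reverse ≠ [] := by simpa using hA
  have hBrne : B.reverse ≠ [] := by simpa using hB
  have hAr2 : ∀ x ∈ A.reverse, 2 ≤ x := fun x hx => hA2 x (List.mem_reverse.mp hx)
  have hBr2 : ∀ x ∈ B.reverse, 2 ≤ x := fun x hx => hB2 x (List.mem_reverse.mp hx)
  have hnAr : RiemCF.num A.reverse = p := by rw [RiemCF.num_reverse]; exact hAnd.1
  have hnBr : RiemCF.num B.reverse = p := by rw [RiemCF.num_reverse]; exact hBnd.1
  set r : ℤ := RiemCF.den A.reverse with hrdef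
  set rB : ℤ := RiemCF.den B.reverse with hrBdef
  have hr0 : 0 < r := RiemCF.den_pos _ hAr2 hArne
  have hrB0 : 0 < rB := RiemCF.den_pos _ hBr2 hBrne
  have hrp : r < p := by
    have := (RiemCF.bounds _ hAr2).2; rw [hnAr] at this; exact this
  have hrBp : rB < p := by
    have := (RiemCF.bounds _ hBr2).2; rw [hnBr] at this; exact this
  have detA := RiemCF.det A.reverse hArne
  have detB := RiemCF.det B.reverse hBrne
  have hdlA : RiemCF.num A.reverse.dropLast = q := by
    rw [RiemCF.dropLast_reverse, RiemCF.num_reverse, ← RiemCF.den_eq_num_tail A hA]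
    exact hAnd.2
  have hdlB : RiemCF.num B.reverse.dropLast = p - q := by
    rw [RiemCF.dropLast_reverse, RiemCF.num_reverse, ← RiemCF.den_eq_num_tail B hB]
    exact hBnd.2
  rw [hnAr, hdlA, ← hrdef] at detA
  rw [hnBr, hdlB, ← hrBdef] at detB
  -- detA : r * q - p * sA = 1,  detB : rB * (p - q) - p * sB = 1
  have hsum : r + rB = p := by
    have hdvd : p ∣ (r + rB) * q := by
      refine ⟨RiemCF.den A.reverse.dropLast + rB - RiemCF.den B.reverse.dropLast, ?_⟩
      linear_combination detA - detB
    have hdvd' : p ∣ r + rB := hcopQ.dvd_of_dvd_mul_right hdvd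
    obtain ⟨k, hk⟩ := hdvd'
    have h1 : 0 < k := by nlinarith
    have h2 : k < 2 := by nlinarith
    have : k = 1 := by omega
    rw [this] at hk; omega
  have hcopPR : IsCoprime p r := ⟨-RiemCF.den A.reverse.dropLast, q, by linear_combination detA⟩
  have hmain := RiemCF.main p.toNat p r le_rfl hr0 hrp hcopPR A.reverse B.reverse
    hArne hBrne hAr2 hBr2 hnAr rfl hnBr (by omega)
  have := hmain.toRiemRel
  simpa using this
end

section
/- If the two strings of integers (a_1,...,a_n) and (b_1,...,b_m), with all entries ≥ 2, are obtained from the pair ((2),(2)) by a finite sequence of the operations (1): ((a_1,...,a_n),(b_1,...,b_m)) → ((a_1,...,a_n+1),(b_1,...,b_m,2)) and (2): ((a_1,...,a_n),(b_1,...,b_m)) → ((a_1,...,a_n,2),(b_1,...,b_m+1)), and if [a_1,...,a_n] = p/q in lowest terms with p > q > 0, then [b_1,...,b_m] = p/(p-q). -/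
/-- The matrix `[[p,r],[q,s]] = M(a₁)⋯M(aₖ)` with `M(a) = [[a,-1],[1,0]]`,
encoded as the tuple `(p, r, q, s)`. -/
def mB : List ℤ → ℤ × ℤ × ℤ × ℤ
  | [] => (1, 0, 0, 1)
  | a :: l =>
      (a * (mB l).1 - (mB l).2.2.1, a * (mB l).2.1 - (mB l).2.2.2, (mB l).1, (mB l).2.1)

lemma mB_append (l : List ℤ) (c : ℤ) :
    mB (l ++ [c]) = (c * (mB l).1 + (mB l).2.1, -(mB l).1,
      c * (mB l).2.2.1 + (mB l).2.2.2, -(mB l).2.2.1) := by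
  induction l with
  | nil => simp [mB]
  | cons a t ih =>
      rw [List.cons_append]
      show mB (a :: (t ++ [c])) = _
      rw [show mB (a :: (t ++ [c])) = (a * (mB (t ++ [c])).1 - (mB (t ++ [c])).2.2.1,
        a * (mB (t ++ [c])).2.1 - (mB (t ++ [c])).2.2.2, (mB (t ++ [c])).1,
        (mB (t ++ [c])).2.1) from rfl, ih]
      refine Prod.ext ?_ (Prod.ext ?_ (Prod.ext ?_ ?_)) <;> simp [mB] <;> ring

lemma bumpLast_concat (L : List ℤ) (b : ℤ) : bumpLast (L ++ [b]) = L ++ [b + 1] := by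
  unfold bumpLast
  rw [List.dropLast_concat, List.getLast!_of_getLast? (List.getLast?_concat (l := L))]

lemma mB_bumpLast (l : List ℤ) (hl : l ≠ []) :
    mB (bumpLast l) = ((mB l).1 - (mB l).2.1, (mB l).2.1,
      (mB l).2.2.1 - (mB l).2.2.2, (mB l).2.2.2) := by
  rcases List.eq_nil_or_concat l with h | ⟨L, b, rfl⟩
  · exact absurd h hl
  rw [List.concat_eq_append, bumpLast_concat, mB_append, mB_append]
  refine Prod.ext ?_ (Prod.ext ?_ (Prod.ext ?_ ?_)) <;> simp <;> ring

lemma good_bumpLast (l : List ℤ) (hl : l ≠ []) (hg : ∀ x ∈ l, 2 ≤ x) :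
    ∀ x ∈ bumpLast l, 2 ≤ x := by
  rcases List.eq_nil_or_concat l with h | ⟨L, b, hlb⟩
  · exact absurd h hl
  rw [List.concat_eq_append] at hlb
  subst hlb
  rw [bumpLast_concat]
  intro x hx
  rcases List.mem_append.1 hx with h | h
  · exact hg x (List.mem_append_left _ h)
  · have hb : 2 ≤ b := hg b (List.mem_append_right _ (List.mem_singleton_self b))
    simp only [List.mem_singleton] at h
    omega

/-- The key invariant, proved by induction on `RiemRel`. -/
lemma riem_key (A B : List ℤ) (h : RiemRel A B) :
    A ≠ [] ∧ B ≠ [] ∧ (∀ x ∈ A, 2 ≤ x) ∧ (∀ x ∈ B, 2 ≤ x) ∧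
    mB B = ((mB A).1, -(mB A).1 - (mB A).2.1,
      (mB A).1 - (mB A).2.2.1, -(mB A).1 + (mB A).2.2.1 - (mB A).2.1 + (mB A).2.2.2) := by
  induction h with
  | base =>
      refine ⟨by simp, by simp, by simp, by simp, ?_⟩
      simp [mB]
  | @op1 a b hr ih =>
      obtain ⟨ha, hb, hga, hgb, heq⟩ := ih
      refine ⟨by simp [bumpLast], by simp, good_bumpLast a ha hga, ?_, ?_⟩
      · intro x hx
        rcases List.mem_append.1 hx with h | h
        · exact hgb x h
        · simp only [List.mem_singleton] at h; omega
      · rw [mB_append, mB_bumpLast a ha, heq]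
        refine Prod.ext ?_ (Prod.ext ?_ (Prod.ext ?_ ?_)) <;> simp <;> ring
  | @op2 a b hr ih =>
      obtain ⟨ha, hb, hga, hgb, heq⟩ := ih
      refine ⟨by simp, by simp [bumpLast], ?_, good_bumpLast b hb hgb, ?_⟩
      · intro x hx
        rcases List.mem_append.1 hx with h | h
        · exact hga x h
        · simp only [List.mem_singleton] at h; omega
      · rw [mB_bumpLast b hb, mB_append, heq]
        refine Prod.ext ?_ (Prod.ext ?_ (Prod.ext ?_ ?_)) <;> simp <;> ring

/-- For a nonempty list with all entries `≥ 2`, the continued fraction equals `p/q`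
where `(p, q)` is the first column of `mB`, and `p > q > 0`. -/
lemma negCF_eq (l : List ℤ) (hl : l ≠ []) (hg : ∀ x ∈ l, 2 ≤ x) :
    (mB l).2.2.1 < (mB l).1 ∧ 0 < (mB l).2.2.1 ∧
      negCF l = ((mB l).1 : ℚ) / ((mB l).2.2.1 : ℚ) := by
  induction l with
  | nil => exact absurd rfl hl
  | cons a t ih =>
      have ha : 2 ≤ a := hg a (by simp)
      rcases eq_or_ne t [] with rfl | ht
      · refine ⟨by simp [mB]; omega, by simp [mB], ?_⟩
        simp [negCF, mB]
      · obtain ⟨h1, h2, h3⟩ := ih ht (fun x hx => hg x (List.mem_cons_of_mem a hx))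
        set pt : ℤ := (mB t).1 with hpt
        set qt : ℤ := (mB t).2.2.1 with hqt
        have hpt0 : 0 < pt := lt_trans h2 h1
        have hptQ : (pt : ℚ) ≠ 0 := by exact_mod_cast hpt0.ne'
        have hqtQ : (qt : ℚ) ≠ 0 := by exact_mod_cast h2.ne'
        refine ⟨?_, ?_, ?_⟩
        · show pt < a * pt - qt; nlinarith
        · exact hpt0
        · show negCF (a :: t) = ((a * pt - qt : ℤ) : ℚ) / (pt : ℚ)
          rw [negCF, h3]
          field_simp
          push_cast; ring

/-- If `(A, B)` is obtained from `((2),(2))` by the operations of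
Riemenschneider's point rule, and `[A] = p/q` in lowest terms with `p > q > 0`, then
`[B] = p/(p-q)`. -/
theorem negCF_of_riemRel (A B : List ℤ) (h : RiemRel A B) (p q : ℤ)
    (h0 : 0 < q) (hqp : q < p) (hcop : Int.gcd p q = 1)
    (hcfA : negCF A = (p : ℚ) / (q : ℚ)) :
    negCF B = (p : ℚ) / ((p : ℚ) - (q : ℚ)) := by
  obtain ⟨hA, hB, hgA, hgB, heq⟩ := riem_key A B h
  obtain ⟨hA1, hA2, hA3⟩ := negCF_eq A hA hgA
  obtain ⟨hB1, hB2, hB3⟩ := negCF_eq B hB hgB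
  set pa : ℤ := (mB A).1 with hpa
  set qa : ℤ := (mB A).2.2.1 with hqa
  have hBp : (mB B).1 = pa := by rw [heq]
  have hBq : (mB B).2.2.1 = pa - qa := by rw [heq]
  have hqa0 : (qa : ℚ) ≠ 0 := by exact_mod_cast hA2.ne'
  have hq0 : (q : ℚ) ≠ 0 := by exact_mod_cast h0.ne'
  have hpq0 : ((p : ℚ) - (q : ℚ)) ≠ 0 := by
    have : (q : ℚ) < (p : ℚ) := by exact_mod_cast hqp
    linarith
  have hpaqa0 : ((pa : ℚ) - (qa : ℚ)) ≠ 0 := by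
    have : (qa : ℚ) < (pa : ℚ) := by exact_mod_cast hA1
    linarith
  -- cross-multiplied identity from hcfA
  have hcross : (pa : ℚ) * (q : ℚ) = (p : ℚ) * (qa : ℚ) := by
    rw [hA3] at hcfA
    exact (div_eq_div_iff hqa0 hq0).1 hcfA
  rw [hB3, hBp, hBq]
  push_cast
  rw [div_eq_div_iff (by push_cast at hpaqa0; exact hpaqa0) hpq0]
  linear_combination (-1 : ℚ) * hcross
end

section
/- There is no subset P = {v_0, v_1, v_2, v_3} ⊆ Z^4 such that: each v_i·v_i ≤ -2 for i=1,2,3 and v_0·v_0 ≤ -3 (with respect to the product v·w = -⟨v,w⟩), v_0·v_i = 1 for i = 1,2,3, v_i·v_j = 0 for distinct i,j ∈ {1,2,3}, and I(P) = Σ_i(-v_i·v_i - 3) < -1. -/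
/-- Vectors in the lattice `ℤⁿ`. -/
abbrev Vec (n : ℕ) := Fin n → ℤ

/-- The intersection product on `ℤⁿ`: `v · w = -⟨v,w⟩`, where `⟨·,·⟩` is the standard
inner product, so that `eᵢ · eⱼ = -δᵢⱼ` (the negative definite diagonal lattice). -/
def Idot {n : ℕ} (v w : Vec n) : ℤ := -∑ i, v i * w i

/-- The standard basis vector `eᵢ` of `ℤⁿ`. -/
def bvec {n : ℕ} (i : Fin n) : Vec n := Pi.single i 1

/-- The quantity `I(P) = ∑_{v ∈ P} (-v·v - 3)`. -/
def Iinv {n : ℕ} (P : Finset (Vec n)) : ℤ := ∑ v ∈ P, (-Idot v v - 3)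

/-- A sign `ε ∈ {1, -1}`. -/
def IsSign (ε : ℤ) : Prop := ε = 1 ∨ ε = -1


lemma detG_aux (a b c e : ℤ) :
    (!![a, -1, -1, -1; -1, b, 0, 0; -1, 0, c, 0; -1, 0, 0, e] : Matrix (Fin 4) (Fin 4) ℤ).det
      = a*b*c*e - b*c - b*e - c*e := by
  rw [Matrix.det_succ_row_zero]
  simp [Fin.sum_univ_succ, Matrix.det_fin_three, Fin.succAbove, Fin.castSucc,
    Fin.castAdd, Fin.castLE]
  ring

lemma not_sq12_aux (d : ℤ) : d * d ≠ 12 := by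
  intro h
  have h1 : d ≤ 4 := by nlinarith
  have h2 : -4 ≤ d := by nlinarith
  interval_cases d <;> omega

lemma not_sq20_aux (d : ℤ) : d * d ≠ 20 := by
  intro h
  have h1 : d ≤ 5 := by nlinarith
  have h2 : -5 ≤ d := by nlinarith
  interval_cases d <;> omega

set_option maxHeartbeats 1000000 in
/-- There is no standard subset `{v₀, v₁, v₂, v₃} ⊆ ℤ⁴` with trivalent
vertex `v₀` (square `≤ -3`) and three legs of length one (squares `≤ -2`) such that
`I(P) < -1`. -/
theorem no_standard_subset_Z4 :
    ¬ ∃ v0 v1 v2 v3 : Vec 4,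
      Idot v0 v0 ≤ -3 ∧ Idot v1 v1 ≤ -2 ∧ Idot v2 v2 ≤ -2 ∧ Idot v3 v3 ≤ -2 ∧
      Idot v0 v1 = 1 ∧ Idot v0 v2 = 1 ∧ Idot v0 v3 = 1 ∧
      Idot v1 v2 = 0 ∧ Idot v1 v3 = 0 ∧ Idot v2 v3 = 0 ∧
      (-Idot v0 v0 - 3) + (-Idot v1 v1 - 3) + (-Idot v2 v2 - 3) + (-Idot v3 v3 - 3) < -1 := by
  rintro ⟨v0, v1, v2, v3, h00, h11, h22, h33, h01, h02, h03, h12, h13, h23, hI⟩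
  let M : Matrix (Fin 4) (Fin 4) ℤ := Matrix.of ![v0, v1, v2, v3]
  have hG : ∀ i j, (M * M.transpose) i j = -Idot (![v0,v1,v2,v3] i) (![v0,v1,v2,v3] j) := by
    intro i j
    rw [Matrix.mul_apply]
    simp only [Idot, neg_neg]
    refine Finset.sum_congr rfl fun k _ => ?_
    simp [M, Matrix.transpose_apply]
  have hMG : M * M.transpose =
      !![-Idot v0 v0, -1, -1, -1; -1, -Idot v1 v1, 0, 0;
         -1, 0, -Idot v2 v2, 0; -1, 0, 0, -Idot v3 v3] := by
    ext i j
    rw [hG i j]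
    have e10 : Idot v1 v0 = 1 := by rw [show Idot v1 v0 = Idot v0 v1 by simp [Idot, mul_comm]]; exact h01
    have e20 : Idot v2 v0 = 1 := by rw [show Idot v2 v0 = Idot v0 v2 by simp [Idot, mul_comm]]; exact h02
    have e30 : Idot v3 v0 = 1 := by rw [show Idot v3 v0 = Idot v0 v3 by simp [Idot, mul_comm]]; exact h03
    have e21 : Idot v2 v1 = 0 := by rw [show Idot v2 v1 = Idot v1 v2 by simp [Idot, mul_comm]]; exact h12
    have e31 : Idot v3 v1 = 0 := by rw [show Idot v3 v1 = Idot v1 v3 by simp [Idot, mul_comm]]; exact h13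
    have e32 : Idot v3 v2 = 0 := by rw [show Idot v3 v2 = Idot v2 v3 by simp [Idot, mul_comm]]; exact h23
    fin_cases i <;> fin_cases j <;> simp_all <;> rfl
  have key : M.det * M.det =
      (-Idot v0 v0) * (-Idot v1 v1) * (-Idot v2 v2) * (-Idot v3 v3)
        - (-Idot v1 v1) * (-Idot v2 v2) - (-Idot v1 v1) * (-Idot v3 v3)
        - (-Idot v2 v2) * (-Idot v3 v3) := by
    rw [show M.det * M.det = (M * M.transpose).det by rw [Matrix.det_mul, Matrix.det_transpose],
      hMG, detG_aux]
  set d : ℤ := M.det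
  set s0 : ℤ := -Idot v0 v0
  set s1 : ℤ := -Idot v1 v1
  set s2 : ℤ := -Idot v2 v2
  set s3 : ℤ := -Idot v3 v3
  have c0 : 3 ≤ s0 := by omega
  have c1 : 2 ≤ s1 := by omega
  have c2 : 2 ≤ s2 := by omega
  have c3 : 2 ≤ s3 := by omega
  have u0 : s0 ≤ 4 := by omega
  have u1 : s1 ≤ 3 := by omega
  have u2 : s2 ≤ 3 := by omega
  have u3 : s3 ≤ 3 := by omega
  interval_cases s0 <;> interval_cases s1 <;> interval_cases s2 <;> interval_cases s3 <;>
    first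
      | omega
      | exact not_sq12_aux d (by linarith [key])
      | exact not_sq20_aux d (by linarith [key])
end

section
/- For complementary legs L_2, L_3 ⊆ Z^n (obtained from the pair {-e_k + e_h, -e_k - e_h} by final (-2)-vector expansions), one has |V_{L_2 ∪ L_3}| = n_2 + n_3 and I(L_2 ∪ L_3) = -2, where n_i = |L_i|, V_S is the set of coordinate indices used by S, and I(S) = Σ_{v∈S}(-v·v - 3). -/
/-- Complementary legs: pairs of chains of vectors obtained from the pair
`([-e_k + e_h], [-e_k - e_h])` by final `(-2)`-vector expansions: one leg has its final
vector bumped by `± e_m` for a fresh coordinate `m`, and a new final `(-2)`-vector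
`±e_j ± e_m` is appended to the other leg, adjacent to its old final vector and
orthogonal to everything else. -/
inductive CompLegs {n : ℕ} (k h : Fin n) : List (Vec n) → List (Vec n) → Prop
  | base (hkh : k ≠ h) : CompLegs k h [-bvec k + bvec h] [-bvec k - bvec h]
  | bumpLeft (L M : List (Vec n)) (m j : Fin n) (ε δ γ : ℤ) (hLM : CompLegs k h L M)
      (hm : ∀ v ∈ L ++ M, v m = 0) (hmk : m ≠ k) (hjk : j ≠ k)
      (hε : IsSign ε) (hδ : IsSign δ) (hγ : IsSign γ)
      (hadj : Idot (δ • bvec j + γ • bvec m) M.getLast! = 1)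
      (horthL : ∀ v ∈ L.dropLast, Idot (δ • bvec j + γ • bvec m) v = 0)
      (horthlast : Idot (δ • bvec j + γ • bvec m) (L.getLast! + ε • bvec m) = 0)
      (horthM : ∀ v ∈ M.dropLast, Idot (δ • bvec j + γ • bvec m) v = 0) :
      CompLegs k h (L.dropLast ++ [L.getLast! + ε • bvec m]) (M ++ [δ • bvec j + γ • bvec m])
  | bumpRight (L M : List (Vec n)) (m j : Fin n) (ε δ γ : ℤ) (hLM : CompLegs k h L M)
      (hm : ∀ v ∈ L ++ M, v m = 0) (hmk : m ≠ k) (hjk : j ≠ k)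
      (hε : IsSign ε) (hδ : IsSign δ) (hγ : IsSign γ)
      (hadj : Idot (δ • bvec j + γ • bvec m) L.getLast! = 1)
      (horthM : ∀ v ∈ M.dropLast, Idot (δ • bvec j + γ • bvec m) v = 0)
      (horthlast : Idot (δ • bvec j + γ • bvec m) (M.getLast! + ε • bvec m) = 0)
      (horthL : ∀ v ∈ L.dropLast, Idot (δ • bvec j + γ • bvec m) v = 0) :
      CompLegs k h (L ++ [δ • bvec j + γ • bvec m]) (M.dropLast ++ [M.getLast! + ε • bvec m])

/-! ### Auxiliary lemmas -/

lemma bvec_apply {n} (p i : Fin n) : bvec p i = if i = p then 1 else 0 := by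
  simp [bvec, Pi.single_apply]

lemma sum_single_mul {n} (p : Fin n) (v : Vec n) : ∑ i, bvec p i * v i = v p := by
  simp [bvec_apply, ite_mul]

lemma Idot_pair {n} (a b : ℤ) (p q : Fin n) (v : Vec n) :
    Idot (a • bvec p + b • bvec q) v = -(a * v p + b * v q) := by
  unfold Idot
  have h1 : ∀ i ∈ Finset.univ, (a • bvec p + b • bvec q) i * v i
      = a * (bvec p i * v i) + b * (bvec q i * v i) := by
    intro i _
    simp only [Pi.add_apply, Pi.smul_apply, smul_eq_mul]
    ring
  rw [Finset.sum_congr rfl h1, Finset.sum_add_distrib, ← Finset.mul_sum, ← Finset.mul_sum,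
    sum_single_mul, sum_single_mul]

lemma pair_apply {n} (a b : ℤ) (p q i : Fin n) :
    (a • bvec p + b • bvec q) i = (if i = p then a else 0) + (if i = q then b else 0) := by
  simp [bvec_apply, Pi.add_apply, mul_ite]

lemma Idot_pair_self {n} (a b : ℤ) (p q : Fin n) (hpq : p ≠ q)
    (ha : IsSign a) (hb : IsSign b) :
    Idot (a • bvec p + b • bvec q) (a • bvec p + b • bvec q) = -2 := by
  rw [Idot_pair, pair_apply, pair_apply]
  simp [hpq, hpq.symm]
  rcases ha with rfl | rfl <;> rcases hb with rfl | rfl <;> norm_num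

lemma Idot_bump {n} (v : Vec n) (m : Fin n) (ε : ℤ) (hε : IsSign ε) (hvm : v m = 0) :
    Idot (v + ε • bvec m) (v + ε • bvec m) = Idot v v - 1 := by
  unfold Idot
  have h1 : ∀ i ∈ Finset.univ, (v + ε • bvec m) i * (v + ε • bvec m) i
      = v i * v i + (2*ε) * (bvec m i * v i) + (ε*ε) * (bvec m i * bvec m i) := by
    intro i _
    simp only [Pi.add_apply, Pi.smul_apply, smul_eq_mul]
    ring
  rw [Finset.sum_congr rfl h1, Finset.sum_add_distrib, Finset.sum_add_distrib,
    ← Finset.mul_sum, ← Finset.mul_sum, sum_single_mul,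
    sum_single_mul (v := bvec m), hvm, bvec_apply]
  have : ε * ε = 1 := by rcases hε with rfl | rfl <;> norm_num
  simp [this]; ring

lemma myGetLast! {α} [Inhabited α] (l : List α) (h : l ≠ []) : l.getLast! = l.getLast h :=
  List.getLast!_of_getLast? (List.getLast?_eq_some_getLast h)

lemma bump_apply {n} (v : Vec n) (m : Fin n) (ε : ℤ) (i : Fin n) :
    (v + ε • bvec m) i = v i + (if i = m then ε else 0) := by
  simp [bvec_apply, Pi.add_apply, mul_ite]

lemma filter_swap {n} (A B : List (Vec n)) :
    (Finset.univ.filter fun p : Fin n => ∃ v ∈ A ++ B, v p ≠ 0)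
      = (Finset.univ.filter fun p : Fin n => ∃ v ∈ B ++ A, v p ≠ 0) := by
  ext p
  simp only [Finset.mem_filter, Finset.mem_univ, true_and, List.mem_append]
  constructor <;> rintro ⟨v, hv, hp⟩ <;> exact ⟨v, hv.symm, hp⟩

lemma sum_swap {n} (A B : List (Vec n)) (f : Vec n → ℤ) :
    ((A ++ B).map f).sum = ((B ++ A).map f).sum := by
  simp [List.sum_append]; ring

/-- The key step lemma: a single final `(-2)`-vector expansion preserves the invariants. -/
lemma step {n} (L M : List (Vec n)) (m j : Fin n) (ε δ γ : ℤ)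
    (hL : L ≠ []) (hM : M ≠ [])
    (hm : ∀ v ∈ L ++ M, v m = 0)
    (hε : IsSign ε) (hδ : IsSign δ) (hγ : IsSign γ)
    (hadj : Idot (δ • bvec j + γ • bvec m) M.getLast! = 1)
    (ihcard : (Finset.univ.filter fun p : Fin n => ∃ v ∈ L ++ M, v p ≠ 0).card
        = L.length + M.length)
    (ihsum : ((L ++ M).map fun v => -Idot v v - 3).sum = -2) :
    (Finset.univ.filter fun p : Fin n =>
        ∃ v ∈ (L.dropLast ++ [L.getLast! + ε • bvec m]) ++ (M ++ [δ • bvec j + γ • bvec m]),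
          v p ≠ 0).card
      = (L.dropLast ++ [L.getLast! + ε • bvec m]).length
        + (M ++ [δ • bvec j + γ • bvec m]).length ∧
    (((L.dropLast ++ [L.getLast! + ε • bvec m]) ++ (M ++ [δ • bvec j + γ • bvec m])).map
        fun v => -Idot v v - 3).sum = -2 := by
  rw [myGetLast! L hL] at *
  rw [myGetLast! M hM] at *
  set g := L.getLast hL with hgdef
  set gm := M.getLast hM with hgmdef
  set w := δ • bvec j + γ • bvec m with hwdef
  have hgL : g ∈ L := List.getLast_mem hL
  have hgmM : gm ∈ M := List.getLast_mem hM
  have hLsplit : L.dropLast ++ [g] = L := List.dropLast_append_getLast hL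
  have hg : g m = 0 := hm g (List.mem_append.2 (Or.inl hgL))
  have hgmm : gm m = 0 := hm gm (List.mem_append.2 (Or.inr hgmM))
  rw [hwdef, Idot_pair, hgmm, mul_zero, add_zero] at hadj
  have hgmj : gm j ≠ 0 := by
    intro h0; rw [h0, mul_zero, neg_zero] at hadj; exact absurd hadj (by norm_num)
  have hjm : j ≠ m := fun e => hgmj (by rw [e]; exact hgmm)
  have hγ0 : γ ≠ 0 := by rcases hγ with rfl | rfl <;> norm_num
  have hset : (Finset.univ.filter fun p : Fin n =>
      ∃ v ∈ (L.dropLast ++ [g + ε • bvec m]) ++ (M ++ [w]), v p ≠ 0)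
      = insert m (Finset.univ.filter fun p : Fin n => ∃ v ∈ L ++ M, v p ≠ 0) := by
    ext p
    simp only [Finset.mem_filter, Finset.mem_univ, true_and, Finset.mem_insert,
      List.mem_append, List.mem_singleton]
    constructor
    · rintro ⟨v, ((hv | rfl) | hv | rfl), hvp⟩
      · exact Or.inr ⟨v, Or.inl (List.dropLast_subset _ hv), hvp⟩
      · by_cases hpm : p = m
        · exact Or.inl hpm
        · refine Or.inr ⟨g, Or.inl hgL, ?_⟩
          rw [bump_apply] at hvp; simpa [hpm] using hvp
      · exact Or.inr ⟨v, Or.inr hv, hvp⟩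
      · rw [hwdef, pair_apply] at hvp
        by_cases hpm : p = m
        · exact Or.inl hpm
        · by_cases hpj : p = j
          · subst hpj; exact Or.inr ⟨gm, Or.inr hgmM, hgmj⟩
          · simp [hpm, hpj] at hvp
    · rintro (rfl | ⟨v, hv, hvp⟩)
      · refine ⟨w, Or.inr (Or.inr rfl), ?_⟩
        rw [hwdef, pair_apply]
        simp [hjm.symm, hγ0]
      · rcases hv with hv | hv
        · rw [← hLsplit] at hv
          rcases List.mem_append.1 hv with hv | hv
          · exact ⟨v, Or.inl (Or.inl hv), hvp⟩
          · rw [List.mem_singleton] at hv; subst hv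
            have hpm : p ≠ m := fun e => hvp (by rw [e]; exact hg)
            refine ⟨g + ε • bvec m, Or.inl (Or.inr rfl), ?_⟩
            rw [bump_apply]; simpa [hpm] using hvp
        · exact ⟨v, Or.inr (Or.inl hv), hvp⟩
  have hmnot : m ∉ (Finset.univ.filter fun p : Fin n => ∃ v ∈ L ++ M, v p ≠ 0) := by
    simp only [Finset.mem_filter, Finset.mem_univ, true_and, not_exists]
    rintro v ⟨hv, hvp⟩
    exact hvp (hm v hv)
  have hlen : 0 < L.length := List.length_pos_iff.2 hL
  constructor
  · rw [hset]
    rw [Finset.card_insert_of_notMem hmnot]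
    rw [ihcard]
    simp only [List.length_append, List.length_dropLast, List.length_singleton]
    clear * - hlen
    omega
  · have hLsum : (L.map fun v => -Idot v v - 3).sum
        = (L.dropLast.map fun v => -Idot v v - 3).sum + (-Idot g g - 3) := by
      conv_lhs => rw [← hLsplit]
      simp [List.sum_append]
    have hbump : Idot (g + ε • bvec m) (g + ε • bvec m) = Idot g g - 1 :=
      Idot_bump g m ε hε hg
    have hwsq : Idot w w = -2 := Idot_pair_self δ γ j m hjm hδ hγ
    simp only [List.map_append, List.sum_append, List.map_cons, List.map_nil,
      List.sum_cons, List.sum_nil] at ihsum ⊢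
    rw [hbump, hwsq]
    rw [hLsum] at ihsum
    linarith

/-- Strengthened induction: both legs are nonempty and the invariants hold. -/
lemma compLegs_aux {n : ℕ} (k h : Fin n) (L M : List (Vec n))
    (hcl : CompLegs k h L M) :
    L ≠ [] ∧ M ≠ [] ∧
    (Finset.univ.filter fun j : Fin n => ∃ v ∈ L ++ M, v j ≠ 0).card
        = L.length + M.length ∧
    ((L ++ M).map fun v => -Idot v v - 3).sum = -2 := by
  induction hcl with
  | base hkh =>
    refine ⟨by simp, by simp, ?_, ?_⟩
    · have hset : (Finset.univ.filter fun p : Fin n =>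
          ∃ v ∈ [-bvec k + bvec h] ++ [-bvec k - bvec h], v p ≠ 0) = {k, h} := by
        ext p
        simp only [Finset.mem_filter, Finset.mem_univ, true_and, List.mem_append,
          List.mem_singleton, Finset.mem_insert, Finset.mem_singleton]
        constructor
        · rintro ⟨v, (rfl | rfl), hvp⟩ <;>
          · by_cases hpk : p = k
            · exact Or.inl hpk
            · by_cases hph : p = h
              · exact Or.inr hph
              · exfalso; apply hvp
                simp [Pi.add_apply, Pi.sub_apply, Pi.neg_apply, bvec_apply, hpk, hph]
        · rintro (hp | hp)
          · refine ⟨-bvec k + bvec h, Or.inl rfl, ?_⟩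
            subst hp
            simp [Pi.add_apply, Pi.neg_apply, bvec_apply, hkh]
          · refine ⟨-bvec k + bvec h, Or.inl rfl, ?_⟩
            subst hp
            have hpk : p ≠ k := fun e => hkh e.symm
            simp [Pi.add_apply, Pi.neg_apply, bvec_apply, hpk]
      rw [hset]
      simp [Finset.card_insert_of_notMem, hkh]
    · have e1 : (-bvec k + bvec h : Vec n) = (-1 : ℤ) • bvec k + (1 : ℤ) • bvec h := by
        funext i; simp
      have e2 : (-bvec k - bvec h : Vec n) = (-1 : ℤ) • bvec k + (-1 : ℤ) • bvec h := by
        funext i; simp [sub_eq_add_neg]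
      have h1 : Idot (-bvec k + bvec h) (-bvec k + bvec h : Vec n) = -2 := by
        rw [e1]; exact Idot_pair_self _ _ _ _ hkh (Or.inr rfl) (Or.inl rfl)
      have h2 : Idot (-bvec k - bvec h) (-bvec k - bvec h : Vec n) = -2 := by
        rw [e2]; exact Idot_pair_self _ _ _ _ hkh (Or.inr rfl) (Or.inr rfl)
      simp [h1, h2]
  | bumpLeft L M m j ε δ γ hLM hm hmk hjk hε hδ hγ hadj horthL horthlast horthM ih =>
    obtain ⟨hL, hM, ihcard, ihsum⟩ := ih
    obtain ⟨hc, hs⟩ := step L M m j ε δ γ hL hM hm hε hδ hγ hadj ihcard ihsum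
    exact ⟨by simp, by simp, hc, hs⟩
  | bumpRight L M m j ε δ γ hLM hm hmk hjk hε hδ hγ hadj horthM horthlast horthL ih =>
    obtain ⟨hL, hM, ihcard, ihsum⟩ := ih
    have hm' : ∀ v ∈ M ++ L, v m = 0 := by
      intro v hv
      rcases List.mem_append.1 hv with hv | hv
      · exact hm v (List.mem_append.2 (Or.inr hv))
      · exact hm v (List.mem_append.2 (Or.inl hv))
    have ihcard' : (Finset.univ.filter fun p : Fin n => ∃ v ∈ M ++ L, v p ≠ 0).card
        = M.length + L.length := by
      rw [filter_swap, ihcard]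
      clear * -
      omega
    have ihsum' : ((M ++ L).map fun v => -Idot v v - 3).sum = -2 := by
      rw [sum_swap]; exact ihsum
    obtain ⟨hc, hs⟩ := step M L m j ε δ γ hM hL hm' hε hδ hγ hadj ihcard' ihsum'
    refine ⟨by simp, by simp, ?_, ?_⟩
    · rw [filter_swap (L ++ [δ • bvec j + γ • bvec m]), hc]
      clear * -
      omega
    · rw [sum_swap]; exact hs

/-- Complementary legs `L₂, L₃ ⊆ ℤⁿ` satisfy
`|V_{L₂ ∪ L₃}| = n₂ + n₃` and `I(L₂ ∪ L₃) = -2`. -/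
theorem compLegs_support_and_I {n : ℕ} (k h : Fin n) (L M : List (Vec n))
    (hcl : CompLegs k h L M) :
    (Finset.univ.filter fun j : Fin n => ∃ v ∈ L ++ M, v j ≠ 0).card
        = L.length + M.length ∧
    ((L ++ M).map fun v => -Idot v v - 3).sum = -2 := by
  obtain ⟨_, _, hc, hs⟩ := compLegs_aux k h L M hcl
  exact ⟨hc, hs⟩
end
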